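/- (Theorem 1 for rNN) Let X be a metric space, c ≥ 2, r : ℝ, D a multiset over X × Fin c, and x : X. Let a := rNN_r(D,x), s_l := s_l(N_r(D,x)), and let b be the largest label among those l ≠ a attaining the maximum of s_l over l ≠ a. Then for every multiset D* over X × Fin c with S(D,D*) ≤ ⌈(s_a − s_b + 𝟙(b < a))/2⌉ − 1 (an inequality of integers), rNN_r(D*,x) = a. -/

import Mathlib

/-- Poisoning size between two multisets: `max (card A) (card B) - card (A ∩ B)`. -/
noncomputable def pSize {α : Type*} (A B : Multiset α) : ℕ :=
  haveI := Classical.decEq α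
  max A.card B.card - (A ∩ B).card

/-- Number of votes for label `l` in a multiset of labeled examples (counted with
multiplicity). -/
def votes {X : Type*} {c : ℕ} (T : Multiset (X × Fin c)) (l : Fin c) : ℕ :=
  T.countP (fun p => p.2 = l)

/-- Tie-broken majority label: the largest label (in the order of `Fin c`) among the
labels attaining the maximum vote count. -/
noncomputable def majLabel {X : Type*} {c : ℕ} (hc : 0 < c) (T : Multiset (X × Fin c)) :
    Fin c :=
  (Finset.univ.filter (fun l : Fin c => ∀ l', votes T l' ≤ votes T l)).max'
    (by
      haveI : NeZero c := ⟨hc.ne'⟩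
      obtain ⟨b, -, hb⟩ := Finset.exists_max_image (Finset.univ : Finset (Fin c)) (votes T)
        Finset.univ_nonempty
      exact ⟨b, Finset.mem_filter.mpr ⟨Finset.mem_univ b, fun l' => hb l' (Finset.mem_univ l')⟩⟩)

/-- The largest label, among those `l ≠ a`, attaining the maximum of `s l` over `l ≠ a`. -/
noncomputable def secondLabel {c : ℕ} (hc : 2 ≤ c) (s : Fin c → ℕ) (a : Fin c) : Fin c :=
  (Finset.univ.filter (fun l : Fin c => l ≠ a ∧ ∀ l', l' ≠ a → s l' ≤ s l)).max'
    (by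
      have h1 : 1 < Fintype.card (Fin c) := by rw [Fintype.card_fin]; omega
      obtain ⟨l0, hl0⟩ := Fintype.exists_ne_of_one_lt_card h1 a
      have hne : (Finset.univ.filter (fun l : Fin c => l ≠ a)).Nonempty :=
        ⟨l0, Finset.mem_filter.mpr ⟨Finset.mem_univ _, hl0⟩⟩
      obtain ⟨b, hb, hbmax⟩ := Finset.exists_max_image _ s hne
      refine ⟨b, Finset.mem_filter.mpr ⟨Finset.mem_univ _, (Finset.mem_filter.mp hb).2, ?_⟩⟩
      intro l' hl'
      exact hbmax l' (Finset.mem_filter.mpr ⟨Finset.mem_univ _, hl'⟩))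

/-- rNN neighbor multiset: training examples within distance `r` of the test input `x`. -/
noncomputable def Nr {X : Type*} [MetricSpace X] {c : ℕ} (r : ℝ)
    (D : Multiset (X × Fin c)) (x : X) : Multiset (X × Fin c) :=
  haveI : DecidablePred (fun p : X × Fin c => dist p.1 x ≤ r) := Classical.decPred _
  D.filter (fun p => dist p.1 x ≤ r)

/-- rNN prediction: tie-broken majority label among the rNN neighbors. -/
noncomputable def rNNpred {X : Type*} [MetricSpace X] {c : ℕ} (hc : 0 < c) (r : ℝ)
    (D : Multiset (X × Fin c)) (x : X) : Fin c :=
  majLabel hc (Nr r D x)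

section auxsec
variable {X : Type*} [MetricSpace X] {c : ℕ} (r : ℝ) (x : X)

lemma Nr_add (A B : Multiset (X × Fin c)) : Nr r (A + B) x = Nr r A x + Nr r B x := by
  simp only [Nr]
  exact Multiset.filter_add _ _ _

lemma Nr_card_le (A : Multiset (X × Fin c)) : (Nr r A x).card ≤ A.card := by
  simp only [Nr]
  exact Multiset.card_le_card (Multiset.filter_le _ _)

lemma votes_nr_mono {A B : Multiset (X × Fin c)} (h : A ≤ B) (l : Fin c) :
    votes (Nr r A x) l ≤ votes (Nr r B x) l := by
  apply Multiset.countP_le_of_le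
  simp only [Nr]
  exact Multiset.filter_le_filter _ h

lemma votes_nr_le {A B : Multiset (X × Fin c)} (h : A ≤ B) (l : Fin c) :
    votes (Nr r B x) l ≤ votes (Nr r A x) l + (B.card - A.card) := by
  obtain ⟨C, rfl⟩ := Multiset.le_iff_exists_add.mp h
  rw [Nr_add, votes]
  rw [Multiset.countP_add]
  have h1 : Multiset.countP (fun p => p.2 = l) (Nr r C x) ≤ C.card :=
    le_trans (Multiset.countP_le_card _ _) (Nr_card_le r x C)
  have h2 : (A + C).card = A.card + C.card := Multiset.card_add _ _
  simp only [votes]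
  omega

lemma pSize_spec {α : Type*} (A B : Multiset α) :
    ∃ E : Multiset α, E ≤ A ∧ E ≤ B ∧ A.card ≤ E.card + pSize A B ∧
      B.card ≤ E.card + pSize A B := by
  letI := Classical.decEq α
  refine ⟨A ∩ B, Multiset.inter_le_left, Multiset.inter_le_right, ?_, ?_⟩ <;>
  · have h1 : (A ∩ B).card ≤ A.card := Multiset.card_le_card Multiset.inter_le_left
    have h2 : (A ∩ B).card ≤ B.card := Multiset.card_le_card Multiset.inter_le_right
    have h3 : pSize A B = max A.card B.card - (A ∩ B).card := rfl
    have h4 : A.card ≤ max A.card B.card := le_max_left _ _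
    have h5 : B.card ≤ max A.card B.card := le_max_right _ _
    omega

-- votes_pSize below
lemma votes_pSize (A B : Multiset (X × Fin c)) (l : Fin c) :
    votes (Nr r A x) l ≤ votes (Nr r B x) l + pSize A B := by
  obtain ⟨E, hEA, hEB, hA, hB⟩ := pSize_spec A B
  have h1 := votes_nr_le r x hEA l
  have h2 := votes_nr_mono r x hEB l
  have h3 : E.card ≤ A.card := Multiset.card_le_card hEA
  omega

lemma votes_pSize2 (A B : Multiset (X × Fin c)) (l : Fin c) :
    votes (Nr r A x) l ≤ votes (Nr r B x) l + pSize A B ∧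
    votes (Nr r B x) l ≤ votes (Nr r A x) l + pSize A B := by
  obtain ⟨E, hEA, hEB, hA, hB⟩ := pSize_spec A B
  have h1 := votes_nr_le r x hEA l
  have h1' := votes_nr_le r x hEB l
  have h2 := votes_nr_mono r x hEB l
  have h2' := votes_nr_mono r x hEA l
  have h3 : E.card ≤ A.card := Multiset.card_le_card hEA
  have h3' : E.card ≤ B.card := Multiset.card_le_card hEB
  constructor <;> omega

end auxsec

lemma ceil_half_le (e : ℤ) : 2 * ⌈((e:ℚ))/2⌉ ≤ e + 1 := by
  have h := Int.ceil_lt_add_one ((e:ℚ)/2)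
  have h2 : (2 * (⌈(e:ℚ)/2⌉:ℤ) : ℚ) < ((e + 2 : ℤ) : ℚ) := by push_cast; linarith
  have h3 : 2 * (⌈(e:ℚ)/2⌉:ℤ) < e + 2 := by exact_mod_cast h2
  omega

lemma majLabel_isMax {X : Type*} {c : ℕ} (hc : 0 < c) (T : Multiset (X × Fin c)) (l : Fin c) :
    votes T l ≤ votes T (majLabel hc T) := by
  have hne : (Finset.univ.filter (fun l : Fin c => ∀ l', votes T l' ≤ votes T l)).Nonempty := by
    haveI : NeZero c := ⟨hc.ne'⟩
    obtain ⟨b, -, hb⟩ := Finset.exists_max_image (Finset.univ : Finset (Fin c)) (votes T)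
      Finset.univ_nonempty
    exact ⟨b, Finset.mem_filter.mpr ⟨Finset.mem_univ b, fun l' => hb l' (Finset.mem_univ l')⟩⟩
  have hm := Finset.max'_mem _ hne
  rw [Finset.mem_filter] at hm
  exact hm.2 l

lemma majLabel_eq {X : Type*} {c : ℕ} (hc : 0 < c) (T : Multiset (X × Fin c)) (a : Fin c)
    (h1 : ∀ l, votes T l ≤ votes T a) (h2 : ∀ l, a < l → votes T l < votes T a) :
    majLabel hc T = a := by
  apply le_antisymm
  · apply Finset.max'_le
    intro y hy
    rw [Finset.mem_filter] at hy
    by_contra hya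
    exact absurd (hy.2 a) (not_le.mpr (h2 y (lt_of_not_ge hya)))
  · exact Finset.le_max' _ _ (Finset.mem_filter.mpr ⟨Finset.mem_univ _, h1⟩)

lemma secondLabel_spec {c : ℕ} (hc : 2 ≤ c) (s : Fin c → ℕ) (a : Fin c) :
    secondLabel hc s a ≠ a ∧ ∀ l, l ≠ a → s l ≤ s (secondLabel hc s a) := by
  have hne : (Finset.univ.filter (fun l : Fin c => l ≠ a ∧ ∀ l', l' ≠ a → s l' ≤ s l)).Nonempty := by
    have h1 : 1 < Fintype.card (Fin c) := by rw [Fintype.card_fin]; omega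
    obtain ⟨l0, hl0⟩ := Fintype.exists_ne_of_one_lt_card h1 a
    have hne' : (Finset.univ.filter (fun l : Fin c => l ≠ a)).Nonempty :=
      ⟨l0, Finset.mem_filter.mpr ⟨Finset.mem_univ _, hl0⟩⟩
    obtain ⟨b, hb, hbmax⟩ := Finset.exists_max_image _ s hne'
    refine ⟨b, Finset.mem_filter.mpr ⟨Finset.mem_univ _, (Finset.mem_filter.mp hb).2, ?_⟩⟩
    intro l' hl'
    exact hbmax l' (Finset.mem_filter.mpr ⟨Finset.mem_univ _, hl'⟩)
  have hm := Finset.max'_mem _ hne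
  rw [Finset.mem_filter] at hm
  exact ⟨hm.2.1, hm.2.2⟩

lemma le_secondLabel {c : ℕ} (hc : 2 ≤ c) (s : Fin c → ℕ) (a l : Fin c) (hla : l ≠ a)
    (hl : ∀ l', l' ≠ a → s l' ≤ s l) : l ≤ secondLabel hc s a :=
  Finset.le_max' _ _ (Finset.mem_filter.mpr ⟨Finset.mem_univ _, hla, hl⟩)

/-- Theorem 1 for rNN: if the poisoning size is at most
`⌈(s_a − s_b + 𝟙(b < a))/2⌉ − 1`, the rNN prediction for `x` is unchanged. -/
theorem rnn_certified_prediction {X : Type*} [MetricSpace X] {c : ℕ} (hc : 2 ≤ c) (r : ℝ)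
    (D : Multiset (X × Fin c)) (x : X) (a b : Fin c)
    (ha : a = rNNpred (by omega) r D x)
    (hb : b = secondLabel hc (fun l => votes (Nr r D x) l) a)
    (Dstar : Multiset (X × Fin c))
    (h : (pSize D Dstar : ℤ) ≤
      ⌈(((votes (Nr r D x) a : ℤ) - (votes (Nr r D x) b : ℤ) +
          if b < a then 1 else 0 : ℤ) : ℚ) / 2⌉ - 1) :
    rNNpred (by omega : 0 < c) r Dstar x = a := by
  have haM : a = majLabel (show 0 < c by omega) (Nr r D x) := ha
  obtain ⟨hbne, F6⟩ := (hb ▸ secondLabel_spec hc (fun l => votes (Nr r D x) l) a :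
    b ≠ a ∧ ∀ l, l ≠ a → votes (Nr r D x) l ≤ votes (Nr r D x) b)
  have F7 : ∀ l, l ≠ a → b < l → votes (Nr r D x) l < votes (Nr r D x) b := by
    intro l hla hbl
    by_contra hle
    push_neg at hle
    have heq : ∀ l', l' ≠ a → votes (Nr r D x) l' ≤ votes (Nr r D x) l :=
      fun l' hl' => le_trans (F6 l' hl') hle
    have : l ≤ b := hb ▸ le_secondLabel hc (fun l => votes (Nr r D x) l) a l hla heq
    exact absurd hbl (not_lt.mpr this)
  have hD : ∀ l, votes (Nr r D x) l ≤ votes (Nr r Dstar x) l + pSize D Dstar ∧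
      votes (Nr r Dstar x) l ≤ votes (Nr r D x) l + pSize D Dstar :=
    fun l => votes_pSize2 r x D Dstar l
  have hceil := ceil_half_le ((votes (Nr r D x) a : ℤ) - (votes (Nr r D x) b : ℤ) +
    if b < a then 1 else 0)
  show majLabel (show 0 < c by omega) (Nr r Dstar x) = a
  apply majLabel_eq
  · intro l
    by_cases hla : l = a
    · subst hla; exact le_refl _
    · have h1 := (hD l).2
      have h2 := (hD a).1
      have h3 := F6 l hla
      by_cases hba : b < a <;>
        simp only [hba, if_true, if_false] at h hceil <;> omega
  · intro l hal
    have hla : l ≠ a := ne_of_gt hal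
    have h1 := (hD l).2
    have h2 := (hD a).1
    by_cases hba : b < a
    · have h3 := F7 l hla (lt_trans hba hal)
      simp only [hba, if_true] at h hceil
      omega
    · have h3 := F6 l hla
      simp only [hba, if_false] at h hceil
      omega
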